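/- Let D_{2n} be the dihedral group of order 2n with n = 4k + 2 for a positive integer k, generated by a of order n and involution b with b⁻¹ab = a⁻¹. Let Z be an inverse-closed left transversal of ⟨a^{2k+1}⟩ in ⟨a⟩, and set X = b^{D_{2n}} ∪ (Z \ ⟨a^{2k+1}⟩), where b^{D_{2n}} is the conjugacy class of b. Then X is a normal subset of D_{2n} and ⟨a^{2k+1}⟩ is a perfect code of CS(D_{2n}, X). -/

import Mathlib

def caySum (G : Type*) [Group G] (X : Set G) : SimpleGraph G :=
  SimpleGraph.fromRel (fun g h => g * h ∈ X)

def IsNormalSet {G : Type*} [Group G] (X : Set G) : Prop :=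
  ∀ g x : G, x ∈ X → g⁻¹ * x * g ∈ X

def IsPerfectCode {V : Type*} (Γ : SimpleGraph V) (C : Set V) : Prop :=
  (∀ u ∈ C, ∀ v ∈ C, ¬ Γ.Adj u v) ∧ ∀ v ∉ C, ∃! u, u ∈ C ∧ Γ.Adj v u

def IsTotalPerfectCode {V : Type*} (Γ : SimpleGraph V) (C : Set V) : Prop :=
  ∀ v, ∃! u, u ∈ C ∧ Γ.Adj v u

def IsLeftTransversal {G : Type*} [Group G] (T : Set G) (H : Subgroup G) : Prop :=
  ∀ g : G, ∃! t, t ∈ T ∧ g⁻¹ * t ∈ H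

namespace DihedralPC

open DihedralGroup

lemma dg_inv_r {n : ℕ} (i : ZMod n) : (r i)⁻¹ = r (-i) := rfl

lemma dg_inv_sr {n : ℕ} (i : ZMod n) : (sr i)⁻¹ = sr i := rfl

lemma two_m_eq_zero (k : ℕ) :
    ((2 * (k : ZMod (4*k+2)) + 1) + (2 * (k : ZMod (4*k+2)) + 1) : ZMod (4*k+2)) = 0 := by
  have h : ((4*k+2 : ℕ) : ZMod (4*k+2)) = 0 := ZMod.natCast_self _
  push_cast at h
  linear_combination h

lemma isConj_sr_iff (k : ℕ) (x : DihedralGroup (4*k+2)) :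
    IsConj (sr 0) x ↔ ∃ j : ZMod (4*k+2), x = sr (j + j) := by
  rw [isConj_iff]
  constructor
  · rintro ⟨c, rfl⟩
    rcases c with j | j
    · exact ⟨-j, by simp only [dg_inv_r, r_mul_sr, sr_mul_r]; exact congrArg sr (by ring)⟩
    · exact ⟨j, by simp only [dg_inv_sr, sr_mul_sr, r_mul_sr]; exact congrArg sr (by ring)⟩
  · rintro ⟨j, rfl⟩
    exact ⟨r (-j), by simp only [dg_inv_r, r_mul_sr, sr_mul_r]; exact congrArg sr (by ring)⟩

lemma even_val_iff (k : ℕ) (i : ZMod (4*k+2)) :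
    (∃ j : ZMod (4*k+2), i = j + j) ↔ 2 ∣ i.val := by
  haveI : NeZero (4*k+2) := ⟨by omega⟩
  constructor
  · rintro ⟨j, rfl⟩
    rw [ZMod.val_add, Nat.dvd_mod_iff ⟨2*k+1, by ring⟩]
    exact ⟨j.val, by ring⟩
  · rintro ⟨t, ht⟩
    refine ⟨(t : ZMod (4*k+2)), ?_⟩
    calc i = ((i.val : ℕ) : ZMod (4*k+2)) := (ZMod.natCast_rightInverse i).symm
    _ = ((2*t : ℕ) : ZMod (4*k+2)) := by rw [ht]
    _ = (t : ZMod (4*k+2)) + t := by push_cast; ring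

lemma val_add_parity (k : ℕ) (i : ZMod (4*k+2)) :
    (2 ∣ i.val) ↔ ¬ (2 ∣ (i + (2*(k:ZMod (4*k+2))+1)).val) := by
  haveI : NeZero (4*k+2) := ⟨by omega⟩
  have hm : (2*(k:ZMod (4*k+2))+1) = ((2*k+1 : ℕ) : ZMod (4*k+2)) := by push_cast; ring
  rw [hm, ZMod.val_add, ZMod.val_cast_of_lt (by omega),
    Nat.dvd_mod_iff ⟨2*k+1, by ring⟩]
  omega

lemma mem_A_iff (k : ℕ) (x : DihedralGroup (4*k+2)) :
    x ∈ Subgroup.zpowers (r (2 * (k:ZMod (4*k+2)) + 1)) ↔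
      x = 1 ∨ x = r (2*(k:ZMod (4*k+2))+1) := by
  set m : ZMod (4*k+2) := 2*(k:ZMod (4*k+2))+1 with hm
  have hg2 : (r m) * (r m) = 1 := by
    rw [r_mul_r, two_m_eq_zero k, one_def]
  have hz2 : (r m) ^ (2:ℤ) = 1 := by
    rw [show (2:ℤ) = 1 + 1 by rfl, zpow_add, zpow_one, hg2]
  constructor
  · rintro ⟨z, rfl⟩
    rcases Int.even_or_odd z with ⟨q, rfl⟩ | ⟨q, rfl⟩
    · left
      show (r m) ^ (q + q) = 1
      rw [show q + q = 2 * q by ring, zpow_mul, hz2, one_zpow]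
    · right
      show (r m) ^ (2 * q + 1) = r m
      rw [zpow_add, zpow_one, zpow_mul, hz2, one_zpow, one_mul]
  · rintro (rfl | rfl)
    · exact Subgroup.one_mem _
    · exact Subgroup.mem_zpowers _

end DihedralPC

open DihedralGroup DihedralPC in
theorem dihedral_perfectCode {k : ℕ} (hk : 0 < k)
    (A : Subgroup (DihedralGroup (4 * k + 2)))
    (hA : A = Subgroup.zpowers (DihedralGroup.r (2 * k + 1 : ZMod (4 * k + 2))))
    (Z : Set (DihedralGroup (4 * k + 2)))
    (hZrot : ∀ z ∈ Z, ∃ i, z = DihedralGroup.r i)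
    (hZinv : ∀ z ∈ Z, z⁻¹ ∈ Z)
    (hZtrans : ∀ g : DihedralGroup (4 * k + 2), (∃ i, g = DihedralGroup.r i) →
      ∃! z, z ∈ Z ∧ g⁻¹ * z ∈ A)
    (X : Set (DihedralGroup (4 * k + 2)))
    (hXdef : X = {x | IsConj (DihedralGroup.sr 0) x} ∪ (Z \ (A : Set _))) :
    IsNormalSet X ∧ IsPerfectCode (caySum (DihedralGroup (4 * k + 2)) X) (A : Set _) := by
  haveI : NeZero (4*k+2) := ⟨by omega⟩
  subst hXdef
  set m : ZMod (4*k+2) := 2 * (k : ZMod (4*k+2)) + 1 with hmdef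
  have hA' : ∀ x, x ∈ A ↔ x = 1 ∨ x = r m := by
    intro x; rw [hA]; exact mem_A_iff k x
  have hmm : m + m = 0 := two_m_eq_zero k
  have hsubm : ∀ i : ZMod (4*k+2), i - m = i + m := by
    intro i
    rw [sub_eq_add_neg, neg_eq_of_add_eq_zero_right hmm]
  have hconj := isConj_sr_iff k
  have hnc : ∀ i : ZMod (4*k+2), ¬ IsConj (sr 0) (r i) := by
    intro i h
    rcases (hconj _).mp h with ⟨j, hj⟩
    cases hj
  have hsrZ : ∀ i : ZMod (4*k+2), sr i ∉ Z := by
    intro i h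
    rcases hZrot _ h with ⟨j, hj⟩
    cases hj
  have hsrX : ∀ t : ZMod (4*k+2),
      sr t ∈ ({x | IsConj (sr 0) x} ∪ (Z \ (A : Set _))) ↔ 2 ∣ t.val := by
    intro t
    constructor
    · rintro (h | ⟨hZ, -⟩)
      · rcases (hconj _).mp h with ⟨j, hj⟩
        have : t = j + j := by injection hj
        exact (even_val_iff k t).mp ⟨j, this⟩
      · exact absurd hZ (hsrZ t)
    · intro h
      left
      rcases (even_val_iff k t).mpr h with ⟨j, hj⟩
      exact (hconj _).mpr ⟨j, congrArg sr hj⟩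
  have hrX : ∀ t : ZMod (4*k+2),
      r t ∈ ({x | IsConj (sr 0) x} ∪ (Z \ (A : Set _))) ↔ (r t ∈ Z ∧ r t ∉ A) := by
    intro t
    constructor
    · rintro (h | h)
      · exact absurd h (hnc t)
      · exact h
    · intro h; right; exact h
  have adj_iff : ∀ g h : DihedralGroup (4*k+2),
      (caySum (DihedralGroup (4*k+2)) ({x | IsConj (sr 0) x} ∪ (Z \ (A : Set _)))).Adj g h ↔
        g ≠ h ∧ (g * h ∈ ({x | IsConj (sr 0) x} ∪ (Z \ (A : Set _)))
          ∨ h * g ∈ ({x | IsConj (sr 0) x} ∪ (Z \ (A : Set _)))) := by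
    intro g h
    simp [caySum, SimpleGraph.fromRel_adj]
  refine ⟨?_, ?_, ?_⟩
  · -- normal set
    intro g x hx
    rcases hx with hx | ⟨hxZ, hxA⟩
    · left
      exact IsConj.trans hx (isConj_iff.mpr ⟨g⁻¹, by group⟩)
    · rcases hZrot _ hxZ with ⟨i, rfl⟩
      rcases g with j | j
      · have : (r j)⁻¹ * r i * r j = r i := by
          simp only [dg_inv_r, r_mul_r]
          exact congrArg r (by ring)
        rw [this]
        exact Or.inr ⟨hxZ, hxA⟩
      · have : (sr j)⁻¹ * r i * sr j = r (-i) := by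
          simp only [dg_inv_sr, sr_mul_r, sr_mul_sr]
          exact congrArg r (by ring)
        rw [this]
        have h1 : (r i)⁻¹ ∈ Z := hZinv _ hxZ
        rw [dg_inv_r] at h1
        refine Or.inr ⟨h1, fun h => hxA ?_⟩
        have := A.inv_mem h
        rw [dg_inv_r, neg_neg] at this
        exact this
  · -- no edges inside A
    intro u hu v hv hadj
    rw [adj_iff] at hadj
    obtain ⟨hne, hor⟩ := hadj
    have hrmX : r m ∉ ({x | IsConj (sr 0) x} ∪ (Z \ (A : Set _))) := by
      rw [hrX]
      rintro ⟨-, h2⟩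
      exact h2 ((hA' _).mpr (Or.inr rfl))
    rcases (hA' u).mp hu with rfl | rfl <;> rcases (hA' v).mp hv with rfl | rfl
    · exact hne rfl
    · rw [one_mul, mul_one] at hor
      exact hrmX (hor.elim id id)
    · rw [one_mul, mul_one] at hor
      exact hrmX (hor.elim id id)
    · exact hne rfl
  · -- perfect domination
    rintro (i | i) hv
    · -- v = r i
      obtain ⟨z, ⟨hzZ, hzA⟩, hzu⟩ := hZtrans (r i) ⟨i, rfl⟩
      have hzA' : z ∉ A := by
        intro h
        exact hv (by
          have : r i = z * ((r i)⁻¹ * z)⁻¹ := by group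
          rw [this]
          exact A.mul_mem h (A.inv_mem hzA))
      refine ⟨(r i)⁻¹ * z, ⟨hzA, ?_⟩, ?_⟩
      · rw [adj_iff]
        constructor
        · intro h
          exact hv (h ▸ hzA)
        · left
          rw [mul_inv_cancel_left]
          exact Or.inr ⟨hzZ, hzA'⟩
      · rintro u' ⟨hu'A, hadj⟩
        rw [adj_iff] at hadj
        obtain ⟨hne, hor⟩ := hadj
        -- u' is a rotation in A, so products commute; let w = r i * u'
        have hcomm : u' * r i = r i * u' := by
          rcases (hA' u').mp hu'A with rfl | rfl
          · rw [one_mul, mul_one]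
          · simp only [r_mul_r]
            exact congrArg r (add_comm m i)
        have hw : r i * u' ∈ ({x | IsConj (sr 0) x} ∪ (Z \ (A : Set _))) := by
          rcases hor with h | h
          · exact h
          · rwa [hcomm] at h
        have hwrot : ∃ t, r i * u' = r t := by
          rcases (hA' u').mp hu'A with rfl | rfl
          · exact ⟨i, by rw [mul_one]⟩
          · exact ⟨i + m, by rw [r_mul_r]⟩
        rcases hwrot with ⟨t, ht⟩
        rw [ht, hrX] at hw
        have : r t = z := hzu (r t) ⟨hw.1, by
          rw [← ht, ← mul_assoc, inv_mul_cancel, one_mul]; exact hu'A⟩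
        rw [← this, ← ht, ← mul_assoc, inv_mul_cancel, one_mul]
    · -- v = sr i
      by_cases hp : 2 ∣ i.val
      · refine ⟨1, ⟨A.one_mem, ?_⟩, ?_⟩
        · rw [adj_iff]
          refine ⟨fun h => (by cases h.trans (one_def)), ?_⟩
          left
          rw [mul_one]
          exact (hsrX i).mpr hp
        · rintro u' ⟨hu'A, hadj⟩
          rcases (hA' u').mp hu'A with rfl | rfl
          · rfl
          · exfalso
            rw [adj_iff] at hadj
            rcases hadj.2 with h | h
            · rw [sr_mul_r] at h
              exact ((val_add_parity k i).mp hp) ((hsrX _).mp h)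
            · rw [r_mul_sr, hsubm] at h
              exact ((val_add_parity k i).mp hp) ((hsrX _).mp h)
      · refine ⟨r m, ⟨(hA' _).mpr (Or.inr rfl), ?_⟩, ?_⟩
        · rw [adj_iff]
          refine ⟨fun h => (by cases h), ?_⟩
          left
          rw [sr_mul_r]
          exact (hsrX _).mpr (by
            by_contra h
            exact hp ((val_add_parity k i).mpr h))
        · rintro u' ⟨hu'A, hadj⟩
          rcases (hA' u').mp hu'A with rfl | rfl
          · exfalso
            rw [adj_iff] at hadj
            rcases hadj.2 with h | h
            · rw [mul_one] at h
              exact hp ((hsrX _).mp h)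
            · rw [one_mul] at h
              exact hp ((hsrX _).mp h)
          · rfl
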